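/- Every LM-system has no non-overlay superpositions: for rules l1 → r1, l2 → r2 of an LM-system R (renamed apart) and any non-root non-variable position p of l1, the subterm l1|_p is not unifiable with l2. Equivalently NOSUP(R) = ∅. -/

import Mathlib

/-! Basic first-order terms, positions, substitutions and rewriting. -/

inductive Term (F : Type) : Type
  | var : Nat → Term F
  | app : F → List (Term F) → Term F

namespace Term

def subst {F : Type} (σ : Nat → Term F) : Term F → Term F
  | var n => σ n
  | app f ts => app f (ts.attach.map fun ⟨t, _⟩ => t.subst σ)

def root {F : Type} : Term F → Option F
  | var _ => none
  | app f _ => some f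

def label {F : Type} : Term F → F ⊕ Nat
  | var n => Sum.inr n
  | app f _ => Sum.inl f

def IsVar {F : Type} : Term F → Prop
  | var _ => True
  | app _ _ => False

def varsL {F : Type} : Term F → List Nat
  | var n => [n]
  | app _ ts => (ts.attach.map fun ⟨t, _⟩ => t.varsL).flatten

end Term

abbrev Rule (F : Type) := Term F × Term F
abbrev TRS (F : Type) := Set (Rule F)

/-- `SubtermAt t p u` : the subterm of `t` at position `p` is `u`. -/
inductive SubtermAt {F : Type} : Term F → List Nat → Term F → Prop
  | here (t : Term F) : SubtermAt t [] t
  | there {f : F} {ts : List (Term F)} {i : Nat} {u : Term F} {p : List Nat} {v : Term F} :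
      ts[i]? = some u → SubtermAt u p v → SubtermAt (Term.app f ts) (i :: p) v

/-- `ReplaceAt t p v t'` : replacing the subterm of `t` at position `p` by `v` yields `t'`. -/
inductive ReplaceAt {F : Type} : Term F → List Nat → Term F → Term F → Prop
  | here (t u : Term F) : ReplaceAt t [] u u
  | there {f : F} {ts : List (Term F)} {i : Nat} {u : Term F} {p : List Nat} {v w : Term F} :
      ts[i]? = some u → ReplaceAt u p v w →
      ReplaceAt (Term.app f ts) (i :: p) v (Term.app f (ts.set i w))

variable {F : Type}

/-- One rewrite step using the given rule (at some position, with some substitution). -/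
def RuleStep (ρ : Rule F) (s t : Term F) : Prop :=
  ∃ (σ : Nat → Term F) (p : List Nat),
    SubtermAt s p (ρ.1.subst σ) ∧ ReplaceAt s p (ρ.2.subst σ) t

def OneStep (R : TRS F) (s t : Term F) : Prop := ∃ ρ ∈ R, RuleStep ρ s t

/-- A rewrite step at the root position. -/
def RootStep (R : TRS F) (s t : Term F) : Prop :=
  ∃ ρ ∈ R, ∃ σ : Nat → Term F, s = ρ.1.subst σ ∧ t = ρ.2.subst σ

def StarRW (R : TRS F) : Term F → Term F → Prop := Relation.ReflTransGen (OneStep R)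
def Plus (R : TRS F) : Term F → Term F → Prop := Relation.TransGen (OneStep R)
/-- Convertibility (the congruence / equational theory generated by `R`). -/
def Conv (R : TRS F) : Term F → Term F → Prop := Relation.EqvGen (OneStep R)
def Joinable (R : TRS F) (s t : Term F) : Prop := ∃ u, StarRW R s u ∧ StarRW R t u
def NormalForm (R : TRS F) (t : Term F) : Prop := ∀ u, ¬ OneStep R t u
/-- `t` is the `R`-normal form of `s`. -/
def NFof (R : TRS F) (s t : Term F) : Prop := StarRW R s t ∧ NormalForm R t
def Terminating (R : TRS F) : Prop := WellFounded (fun a b : Term F => OneStep R b a)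
def Confluent (R : TRS F) : Prop := ∀ s t u, StarRW R s t → StarRW R s u → Joinable R t u
def Convergent (R : TRS F) : Prop := Confluent R ∧ Terminating R

/-- every proper subterm is irreducible -/
def EpsIrreducible (R : TRS F) (t : Term F) : Prop :=
  ∀ p u, SubtermAt t p u → p ≠ [] → NormalForm R u

def InnermostRedex (R : TRS F) (t : Term F) : Prop :=
  EpsIrreducible R t ∧ ¬ NormalForm R t

/-- Forward-closed, via the one-step-to-normal-form characterization. -/
def FCclosed (R : TRS F) : Prop :=
  ∀ t, InnermostRedex R t → ∀ u, NFof R t u → OneStep R t u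

def Unifies (σ : Nat → Term F) (s t : Term F) : Prop := s.subst σ = t.subst σ

def IsMGU (σ : Nat → Term F) (s t : Term F) : Prop :=
  Unifies σ s t ∧ ∀ τ, Unifies τ s t → ∃ δ, ∀ x, τ x = (σ x).subst δ

def IsRenaming (ρ : Nat → Term F) : Prop :=
  ∃ f : Nat → Nat, Function.Injective f ∧ ∀ n, ρ n = Term.var (f n)

/-- Redundancy criterion for an oriented equation `e` whose right-hand side is
reachable from its left-hand side: some proper subterm of the lhs is reducible. -/
def Redundant (R : TRS F) (e : Rule F) : Prop :=
  ∃ p u, p ≠ ([] : List Nat) ∧ SubtermAt e.1 p u ∧ ¬ NormalForm R u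

/-- `R₁ ↝ R₂`: forward overlaps of rules of `R₂` (renamed apart) into
right-hand sides of rules of `R₁`, at non-variable positions, via an mgu. -/
def FStep (R₁ R₂ : TRS F) : TRS F :=
  { e | ∃ (l₁ r₁ l₂ r₂ : Term F) (ρ : Nat → Term F) (p : List Nat) (u : Term F)
          (σ : Nat → Term F) (r₁' : Term F),
      (l₁, r₁) ∈ R₁ ∧ (l₂, r₂) ∈ R₂ ∧ IsRenaming ρ ∧
      SubtermAt r₁ p u ∧ ¬ u.IsVar ∧ IsMGU σ u (l₂.subst ρ) ∧
      ReplaceAt r₁ p (r₂.subst ρ) r₁' ∧ e = (l₁.subst σ, r₁'.subst σ) }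

def FCiter (R : TRS F) : Nat → TRS F
  | 0 => R
  | k + 1 => FCiter R k ∪ { e | e ∈ FStep (FCiter R k) R ∧ ¬ Redundant (FCiter R k) e }

def FCinf (R : TRS F) : TRS F := ⋃ k, FCiter R k

/-- Forward-closed, via the forward-closure construction: `FC(R) = R`. -/
def ForwardClosedFC (R : TRS F) : Prop := FCinf R = R

/-- `RHS(R)`: `R` together with the conclusions of right-hand-side critical
pair inferences (second rule renamed apart). -/
def RHSset (R : TRS F) : TRS F :=
  R ∪ { e | ∃ (s t u₀ v₀ : Term F) (ρ σ : Nat → Term F), (s, t) ∈ R ∧ (u₀, v₀) ∈ R ∧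
        IsRenaming ρ ∧ IsMGU σ t (v₀.subst ρ) ∧
        s.subst σ ≠ (u₀.subst ρ).subst σ ∧ e = (s.subst σ, (u₀.subst ρ).subst σ) }

/-- the (unordered) pairs of root symbols of two equations coincide -/
def RootPairSimilar (e₁ e₂ : Rule F) : Prop :=
  (e₁.1.root = e₂.1.root ∧ e₁.2.root = e₂.2.root) ∨
  (e₁.1.root = e₂.2.root ∧ e₁.2.root = e₂.1.root)

def QuasiDet (E : TRS F) : Prop :=
  (∀ e ∈ E, ¬ e.1.IsVar ∧ ¬ e.2.IsVar) ∧
  (∀ e ∈ E, e.1.root ≠ e.2.root) ∧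
  (∀ e₁ ∈ E, ∀ e₂ ∈ E, e₁ ≠ e₂ → ¬ RootPairSimilar e₁ e₂)

def HasRootPairRepetition (E : TRS F) : Prop :=
  ∃ e₁ ∈ E, ∃ e₂ ∈ E, e₁ ≠ e₂ ∧ RootPairSimilar e₁ e₂

def VarPreserving (R : TRS F) : Prop :=
  ∀ e ∈ R, ∀ n, n ∈ Term.varsL e.1 ↔ n ∈ Term.varsL e.2

def RightReduced (R : TRS F) : Prop := ∀ e ∈ R, NormalForm R e.2

def AlmostLeftReduced (R : TRS F) : Prop :=
  ¬ ∃ (l₁ r₁ l₂ r₂ : Term F) (p : List Nat) (u : Term F) (σ : Nat → Term F),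
      (l₁, r₁) ∈ R ∧ (l₂, r₂) ∈ R ∧ p ≠ [] ∧ SubtermAt l₁ p u ∧ u = l₂.subst σ

def NonSubtermCollapsing (R : TRS F) : Prop :=
  ¬ ∃ (t u : Term F) (p : List Nat), p ≠ [] ∧ SubtermAt u p t ∧ Conv R t u

structure LMSystem (R : TRS F) : Prop where
  convergent : Convergent R
  almostLeftReduced : AlmostLeftReduced R
  rightReduced : RightReduced R
  nonCollapsing : NonSubtermCollapsing R
  forwardClosed : FCclosed R
  quasiDet : QuasiDet (RHSset R)

/-- the symbol (function symbol or variable) of a term at a position, if defined -/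
def labelAt {F : Type} : List Nat → Term F → Option (F ⊕ Nat)
  | [], t => some t.label
  | i :: p, Term.app _ ts => (ts[i]?).bind (labelAt p)
  | _ :: _, Term.var _ => none

/-- outermost distinguishing position -/
def ODP (s t : Term F) (p : List Nat) : Prop :=
  (labelAt p s ≠ none ∨ labelAt p t ≠ none) ∧
  labelAt p s ≠ labelAt p t ∧
  ∀ q, q <+: p → q ≠ p → labelAt q s = labelAt q t


/-! ### Auxiliary development for the proof -/

namespace NoSup

open Term

/- ## Term basics -/

theorem subst_app (σ : Nat → Term F) (f : F) (ts : List (Term F)) :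
    (Term.app f ts).subst σ = Term.app f (ts.map (Term.subst σ)) := by
  rw [Term.subst]; congr 1; simp

theorem varsL_app (f : F) (ts : List (Term F)) :
    (Term.app f ts).varsL = (ts.map Term.varsL).flatten := by
  rw [Term.varsL]; congr 1; simp

def tsize : Term F → Nat
  | .var _ => 1
  | .app _ ts => 1 + (ts.attach.map fun ⟨t, _⟩ => tsize t).sum

theorem tsize_app (f : F) (ts : List (Term F)) :
    tsize (Term.app f ts) = 1 + (ts.map tsize).sum := by
  rw [tsize]; congr 2; simp

theorem tsize_pos (t : Term F) : 0 < tsize t := by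
  cases t <;> simp [tsize, tsize_app]

theorem tsize_lt_of_mem {t : Term F} {ts : List (Term F)} (h : t ∈ ts) (f : F) :
    tsize t < tsize (Term.app f ts) := by
  rw [tsize_app]
  have : tsize t ≤ (ts.map tsize).sum :=
    List.single_le_sum (fun x _ => Nat.zero_le x) _ (List.mem_map_of_mem h)
  omega

/-- structural induction principle avoiding nested recursion pain -/
theorem term_ind {P : Term F → Prop} (hv : ∀ n, P (.var n))
    (ha : ∀ (f : F) (ts : List (Term F)), (∀ t ∈ ts, P t) → P (.app f ts)) : ∀ t, P t := by
  have key : ∀ (n : Nat) (t : Term F), tsize t ≤ n → P t := by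
    intro n
    induction n with
    | zero => intro t ht; have := tsize_pos t; omega
    | succ n ih =>
      intro t ht
      cases t with
      | var m => exact hv m
      | app f ts =>
        refine ha f ts (fun s hs => ih s ?_)
        have := tsize_lt_of_mem hs f; omega
  exact fun t => key (tsize t) t le_rfl


theorem var_subst (σ : Nat → Term F) (n : Nat) : (Term.var n).subst σ = σ n := by
  rw [Term.subst]

theorem mem_varsL_app {x : Nat} {f : F} {ts : List (Term F)} :
    x ∈ (Term.app f ts).varsL ↔ ∃ t ∈ ts, x ∈ t.varsL := by
  rw [varsL_app]; simp

theorem subst_congr {t : Term F} {σ σ' : Nat → Term F}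
    (h : ∀ x ∈ t.varsL, σ x = σ' x) : t.subst σ = t.subst σ' := by
  induction t using term_ind with
  | hv n => simp only [Term.subst]; exact h n (by simp [Term.varsL])
  | ha f ts ih =>
    rw [subst_app, subst_app]
    congr 1
    apply List.map_congr_left
    intro s hs
    exact ih s hs (fun x hx => h x (mem_varsL_app.mpr ⟨s, hs, hx⟩))

theorem subst_var (t : Term F) : t.subst Term.var = t := by
  induction t using term_ind with
  | hv n => simp [Term.subst]
  | ha f ts ih =>
    rw [subst_app]
    congr 1
    conv_rhs => rw [← List.map_id ts]
    exact List.map_congr_left ih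

theorem subst_subst (t : Term F) (σ δ : Nat → Term F) :
    (t.subst σ).subst δ = t.subst (fun x => (σ x).subst δ) := by
  induction t using term_ind with
  | hv n => simp [Term.subst]
  | ha f ts ih =>
    rw [subst_app, subst_app, subst_app, List.map_map]
    congr 1
    exact List.map_congr_left (fun s hs => ih s hs)

theorem mem_varsL_subst {y : Nat} {t : Term F} {σ : Nat → Term F}
    (h : y ∈ (t.subst σ).varsL) : ∃ x ∈ t.varsL, y ∈ (σ x).varsL := by
  induction t using term_ind with
  | hv n => simp only [Term.subst] at h; exact ⟨n, by simp [Term.varsL], h⟩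
  | ha f ts ih =>
    rw [subst_app, mem_varsL_app] at h
    obtain ⟨s, hs, hy⟩ := h
    obtain ⟨s₀, hs₀, rfl⟩ := List.mem_map.mp hs
    obtain ⟨x, hx, hyx⟩ := ih s₀ hs₀ hy
    exact ⟨x, mem_varsL_app.mpr ⟨s₀, hs₀, hx⟩, hyx⟩

theorem not_isVar_iff {t : Term F} : ¬ t.IsVar ↔ ∃ f ts, t = Term.app f ts := by
  cases t <;> simp [Term.IsVar]

theorem root_subst {t : Term F} (h : ¬ t.IsVar) (σ : Nat → Term F) :
    (t.subst σ).root = t.root := by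
  obtain ⟨f, ts, rfl⟩ := not_isVar_iff.mp h
  rw [subst_app]; rfl

theorem app_root (f : F) (ts : List (Term F)) : (Term.app f ts).root = some f := rfl

theorem subst_app_not_var {t : Term F} (h : ¬ t.IsVar) (σ : Nat → Term F) :
    ¬ (t.subst σ).IsVar := by
  obtain ⟨f, ts, rfl⟩ := not_isVar_iff.mp h
  rw [subst_app]; simp [Term.IsVar]

/- ## SubtermAt / ReplaceAt basics -/

theorem subtermAt_nil {t s : Term F} (h : SubtermAt t [] s) : s = t := by
  cases h; rfl

theorem subtermAt_cons {f : F} {ts : List (Term F)} {i : Nat} {q : List Nat} {v : Term F}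
    (h : SubtermAt (Term.app f ts) (i :: q) v) :
    ∃ u, ts[i]? = some u ∧ SubtermAt u q v := by
  cases h with
  | there hget hsub => exact ⟨_, hget, hsub⟩

theorem subtermAt_var {n : Nat} {q : List Nat} {v : Term F}
    (h : SubtermAt (Term.var n) q v) : q = [] ∧ v = Term.var n := by
  cases h with
  | here => exact ⟨rfl, rfl⟩

theorem subtermAt_det {t : Term F} {q : List Nat} {a b : Term F}
    (ha : SubtermAt t q a) (hb : SubtermAt t q b) : a = b := by
  induction ha generalizing b with
  | here => exact (subtermAt_nil hb).symm
  | there hget hsub ih =>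
    obtain ⟨u', hget', hsub'⟩ := subtermAt_cons hb
    rw [hget] at hget'
    cases hget'
    exact ih hsub'

theorem subtermAt_trans {t s w : Term F} {q q' : List Nat}
    (h : SubtermAt t q s) (h' : SubtermAt s q' w) : SubtermAt t (q ++ q') w := by
  induction h with
  | here => exact h'
  | there hget hsub ih => exact SubtermAt.there hget (ih h')

theorem subtermAt_subst {t s : Term F} {q : List Nat} (σ : Nat → Term F)
    (h : SubtermAt t q s) : SubtermAt (t.subst σ) q (s.subst σ) := by
  induction h with
  | here => exact SubtermAt.here _
  | there hget hsub ih =>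
    rw [subst_app]
    refine SubtermAt.there ?_ ih
    rw [List.getElem?_map, hget]; rfl

theorem tsize_le_of_subtermAt {t s : Term F} {q : List Nat} (h : SubtermAt t q s) :
    tsize s ≤ tsize t := by
  induction h with
  | here => exact le_rfl
  | there hget hsub ih =>
    rename_i f ts i u p v
    have : tsize u < tsize (Term.app f ts) := tsize_lt_of_mem (List.mem_of_getElem? hget) f
    omega

theorem tsize_lt_of_subtermAt {t s : Term F} {q : List Nat} (h : SubtermAt t q s)
    (hq : q ≠ []) : tsize s < tsize t := by
  cases h with
  | here => exact absurd rfl hq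
  | there hget hsub =>
    rename_i f ts i u p
    have h1 := tsize_le_of_subtermAt hsub
    have h2 : tsize u < tsize (Term.app f ts) := tsize_lt_of_mem (List.mem_of_getElem? hget) f
    omega

theorem exists_pos_of_mem_varsL {x : Nat} {t : Term F} (h : x ∈ t.varsL) :
    ∃ q, SubtermAt t q (Term.var x) := by
  induction t using term_ind with
  | hv n =>
    simp [Term.varsL] at h
    subst h
    exact ⟨[], SubtermAt.here _⟩
  | ha f ts ih =>
    obtain ⟨s, hs, hx⟩ := mem_varsL_app.mp h
    obtain ⟨q, hq⟩ := ih s hs hx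
    obtain ⟨i, hi⟩ := List.get_of_mem hs
    have hget : ts[i]? = some s := by
      rw [← hi]; simp
    exact ⟨i :: q, SubtermAt.there hget hq⟩

theorem mem_varsL_of_subtermAt {t s : Term F} {q : List Nat}
    (h : SubtermAt t q s) {x : Nat} (hx : x ∈ s.varsL) : x ∈ t.varsL := by
  induction h with
  | here => exact hx
  | there hget hsub ih =>
    exact mem_varsL_app.mpr ⟨_, List.mem_of_getElem? hget, ih hx⟩

/-- Decomposition of a subterm of an instance. -/
theorem subtermAt_subst_decomp {t v : Term F} {σ : Nat → Term F} {q : List Nat}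
    (h : SubtermAt (t.subst σ) q v) :
    (∃ w, SubtermAt t q w ∧ ¬ w.IsVar ∧ v = w.subst σ) ∨
    (∃ x q₁ q₂, SubtermAt t q₁ (Term.var x) ∧ q = q₁ ++ q₂ ∧ SubtermAt (σ x) q₂ v) := by
  induction t using term_ind generalizing q v with
  | hv n =>
    simp only [Term.subst] at h
    exact Or.inr ⟨n, [], q, SubtermAt.here _, rfl, h⟩
  | ha f ts ih =>
    rw [subst_app] at h
    cases q with
    | nil =>
      refine Or.inl ⟨Term.app f ts, SubtermAt.here _, by simp [Term.IsVar], ?_⟩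
      rw [subtermAt_nil h, subst_app]
    | cons i q' =>
      obtain ⟨u, hget, hsub⟩ := subtermAt_cons h
      rw [List.getElem?_map] at hget
      cases hts : ts[i]? with
      | none => rw [hts] at hget; cases hget
      | some t₀ =>
        rw [hts] at hget
        cases hget
        rcases ih t₀ (List.mem_of_getElem? hts) hsub with ⟨w, hw, hnv, rfl⟩ | ⟨x, q₁, q₂, hx, rfl, hσ⟩
        · exact Or.inl ⟨w, SubtermAt.there hts hw, hnv, rfl⟩
        · exact Or.inr ⟨x, i :: q₁, q₂, SubtermAt.there hts hx, rfl, hσ⟩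

theorem replaceAt_nil {t v w : Term F} (h : ReplaceAt t [] v w) : w = v := by
  cases h; rfl

theorem get?_set_self {ts : List (Term F)} {i : Nat} {u : Term F}
    (h : ts[i]? = some u) (w : Term F) : (ts.set i w)[i]? = some w := by
  have hi : i < ts.length := List.getElem?_eq_some_iff.mp h |>.1
  simp [hi]

theorem replaceAt_subtermAt {t v w : Term F} {q : List Nat}
    (h : ReplaceAt t q v w) : SubtermAt w q v := by
  induction h with
  | here => exact SubtermAt.here _
  | there hget hrep ih => exact SubtermAt.there (get?_set_self hget _) ih

theorem subterm_replace_lift {t s s' v : Term F} {q p : List Nat}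
    (h : SubtermAt t q s) (hr : ReplaceAt s p v s') :
    ∃ t', ReplaceAt t (q ++ p) v t' ∧ ReplaceAt t q s' t' := by
  induction h with
  | here => exact ⟨s', hr, ReplaceAt.here _ _⟩
  | there hget hsub ih =>
    obtain ⟨t', h1, h2⟩ := ih hr
    exact ⟨_, ReplaceAt.there hget h1, ReplaceAt.there hget h2⟩

/- ## Rewriting lemmas -/

variable {R : TRS F}

theorem rootStep_self {l r : Term F} (h : (l, r) ∈ R) (σ : Nat → Term F) :
    OneStep R (l.subst σ) (r.subst σ) :=
  ⟨(l, r), h, σ, [], SubtermAt.here _, ReplaceAt.here _ _⟩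

theorem oneStep_lift {t s s' : Term F} {q : List Nat}
    (h : SubtermAt t q s) (hs : OneStep R s s') :
    ∃ t', OneStep R t t' ∧ ReplaceAt t q s' t' := by
  obtain ⟨ρ, hρ, σ, pp, hsub, hrep⟩ := hs
  obtain ⟨t', h1, h2⟩ := subterm_replace_lift h hrep
  exact ⟨t', ⟨ρ, hρ, σ, q ++ pp, subtermAt_trans h hsub, h1⟩, h2⟩

theorem normalForm_subterm {t s : Term F} {q : List Nat}
    (hnf : NormalForm R t) (h : SubtermAt t q s) : NormalForm R s := by
  intro w hw
  obtain ⟨t', ht', _⟩ := oneStep_lift h hw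
  exact hnf t' ht'

theorem redex_not_nf {l r : Term F} (h : (l, r) ∈ R) (σ : Nat → Term F) :
    ¬ NormalForm R (l.subst σ) := fun hnf => hnf _ (rootStep_self h σ)

theorem var_normalForm (hR : ∀ e ∈ R, ¬ (e.1 : Term F).IsVar) (n : Nat) :
    NormalForm R (Term.var n) := by
  rintro w ⟨ρ, hρ, σ, pp, hsub, -⟩
  obtain ⟨f, ts, hfts⟩ := not_isVar_iff.mp (hR ρ hρ)
  cases pp with
  | nil =>
    have := subtermAt_nil hsub
    rw [hfts, subst_app] at this
    cases this
  | cons i q => cases hsub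

/- star rewriting congruence -/

theorem get?_append_len (l : List (Term F)) (a : Term F) (r : List (Term F)) :
    (l ++ a :: r)[l.length]? = some a := by
  induction l with
  | nil => rfl
  | cons b bs ih => simpa using ih

theorem set_append_len (l : List (Term F)) (a b : Term F) (r : List (Term F)) :
    (l ++ a :: r).set l.length b = l ++ b :: r := by
  induction l with
  | nil => rfl
  | cons c cs ih => simp [ih]

theorem oneStep_congr_at {a b : Term F} (h : OneStep R a b) (f : F)
    (l r : List (Term F)) :
    OneStep R (Term.app f (l ++ a :: r)) (Term.app f (l ++ b :: r)) := by
  obtain ⟨ρ, hρ, σ, pp, hsub, hrep⟩ := h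
  refine ⟨ρ, hρ, σ, l.length :: pp, SubtermAt.there (get?_append_len l a r) hsub, ?_⟩
  have := ReplaceAt.there (f := f) (get?_append_len l a r) hrep
  rwa [set_append_len] at this

theorem star_congr_at {a b : Term F} (h : StarRW R a b) (f : F)
    (l r : List (Term F)) :
    StarRW R (Term.app f (l ++ a :: r)) (Term.app f (l ++ b :: r)) := by
  induction h with
  | refl => exact Relation.ReflTransGen.refl
  | tail hs h1 ih => exact ih.tail (oneStep_congr_at h1 f l r)

theorem star_app_aux {ts ts' : List (Term F)} (h : List.Forall₂ (StarRW R) ts ts') :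
    ∀ pre : List (Term F), ∀ f : F,
      StarRW R (Term.app f (pre ++ ts)) (Term.app f (pre ++ ts')) := by
  induction h with
  | nil => intro pre f; exact Relation.ReflTransGen.refl
  | cons hab hrest ih =>
    intro pre f
    rename_i a b as bs
    have hh1 := star_congr_at hab f pre as
    have hh2 := ih (pre ++ [b]) f
    simp only [List.append_assoc, List.singleton_append] at hh2
    exact hh1.trans hh2

theorem star_app {ts ts' : List (Term F)} (h : List.Forall₂ (StarRW R) ts ts') (f : F) :
    StarRW R (Term.app f ts) (Term.app f ts') := by
  simpa using star_app_aux h [] f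

theorem star_subst_point {σ σ' : Nat → Term F}
    (h : ∀ x, StarRW R (σ x) (σ' x)) (t : Term F) :
    StarRW R (t.subst σ) (t.subst σ') := by
  induction t using term_ind with
  | hv n => simpa [Term.subst] using h n
  | ha f ts ih =>
    rw [subst_app, subst_app]
    refine star_app ?_ f
    rw [List.forall₂_map_right_iff, List.forall₂_map_left_iff]
    exact List.forall₂_same.mpr (fun t ht => ih t ht)

theorem star_nf_eq {n m : Term F} (hn : NormalForm R n) (h : StarRW R n m) : n = m := by
  induction h using Relation.ReflTransGen.head_induction_on with
  | refl => rfl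
  | head h1 _ _ => exact absurd h1 (hn _)

/- normal forms exist and are unique -/

theorem nfof_exists (hterm : Terminating R) (s : Term F) : ∃ n, NFof R s n := by
  induction s using hterm.induction with
  | _ s ih =>
    by_cases hs : NormalForm R s
    · exact ⟨s, Relation.ReflTransGen.refl, hs⟩
    · simp only [NormalForm, not_forall, not_not] at hs
      obtain ⟨y, hy⟩ := hs
      obtain ⟨n, hn1, hn2⟩ := ih y hy
      exact ⟨n, Relation.ReflTransGen.head hy hn1, hn2⟩

theorem nfof_unique (hconf : Confluent R) {s n₁ n₂ : Term F}
    (h1 : NFof R s n₁) (h2 : NFof R s n₂) : n₁ = n₂ := by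
  obtain ⟨v, hv1, hv2⟩ := hconf s n₁ n₂ h1.1 h2.1
  rw [star_nf_eq h1.2 hv1, star_nf_eq h2.2 hv2]

/- ## The well-founded order: reduction union proper subterm -/

def SubT (a b : Term F) : Prop := ∃ q, q ≠ [] ∧ SubtermAt b q a

def RelW (R : TRS F) (a b : Term F) : Prop := OneStep R b a ∨ SubT a b

theorem acc_relW_aux (hterm : Terminating R) :
    ∀ t : Term F, ∀ N, ∀ (s : Term F) (q : List Nat), tsize s ≤ N →
      SubtermAt t q s → Acc (RelW R) s := by
  intro t
  induction t using hterm.induction with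
  | _ t ih =>
    intro N
    induction N with
    | zero =>
      intro s q hs _
      have := tsize_pos s; omega
    | succ N ihN =>
      intro s q hs hsub
      constructor
      rintro y (hy | ⟨q', hq', hsub'⟩)
      · -- y is obtained from s by a rewrite step
        obtain ⟨t', ht', hrep⟩ := oneStep_lift hsub hy
        exact ih t' ht' (tsize y) y q le_rfl (replaceAt_subtermAt hrep)
      · -- y is a proper subterm of s
        have hlt := tsize_lt_of_subtermAt hsub' hq'
        exact ihN y (q ++ q') (by omega) (subtermAt_trans hsub hsub')

theorem wf_relW (hterm : Terminating R) : WellFounded (RelW R) :=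
  ⟨fun t => acc_relW_aux hterm t (tsize t) t [] le_rfl (SubtermAt.here _)⟩

/-- `a` strictly below `b` -/
def Below (R : TRS F) : Term F → Term F → Prop := Relation.TransGen (RelW R)

theorem wf_below (hterm : Terminating R) : WellFounded (Below R) :=
  (wf_relW hterm).transGen

theorem below_of_subT {a b : Term F} (h : SubT a b) : Below R a b :=
  Relation.TransGen.single (Or.inr h)

theorem below_of_step {a b : Term F} (h : OneStep R a b) : Below R b a :=
  Relation.TransGen.single (Or.inl h)

theorem below_star_trans {a b c : Term F} (hab : StarRW R a b) (h : Below R a c) :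
    Below R b c := by
  induction hab with
  | refl => exact h
  | tail hs h1 ih => exact (Relation.TransGen.single (show RelW R _ _ from Or.inl h1)).trans ih

theorem below_of_star_ne {a b : Term F} (hab : StarRW R a b) (hne : b ≠ a) :
    Below R b a := by
  induction hab with
  | refl => exact absurd rfl hne
  | tail hs h1 ih =>
    rename_i b' c'
    by_cases hb : b' = a
    · subst hb; exact below_of_step h1
    · exact (below_of_step h1).trans (ih hb)

/- ## Unification: unifiable pairs have a most general unifier -/

def UnifiesL (θ : Nat → Term F) (L : List (Term F × Term F)) : Prop :=
  ∀ pr ∈ L, pr.1.subst θ = pr.2.subst θ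

def MGUL (σ : Nat → Term F) (L : List (Term F × Term F)) : Prop :=
  UnifiesL σ L ∧ ∀ τ, UnifiesL τ L → ∃ δ, ∀ x, τ x = (σ x).subst δ

def varsP (L : List (Term F × Term F)) : Finset Nat :=
  (L.map (fun pr => pr.1.varsL ++ pr.2.varsL)).flatten.toFinset

def sizeP (L : List (Term F × Term F)) : Nat :=
  (L.map (fun pr => tsize pr.1 + tsize pr.2)).sum

theorem mem_varsP {y : Nat} {L : List (Term F × Term F)} :
    y ∈ varsP L ↔ ∃ pr ∈ L, y ∈ (pr.1 : Term F).varsL ∨ y ∈ (pr.2 : Term F).varsL := by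
  simp only [varsP, List.mem_toFinset, List.mem_flatten, List.mem_map]
  constructor
  · rintro ⟨l, ⟨pr, hpr, rfl⟩, hy⟩
    exact ⟨pr, hpr, by simpa using hy⟩
  · rintro ⟨pr, hpr, hy⟩
    exact ⟨_, ⟨pr, hpr, rfl⟩, by simpa using hy⟩

theorem sizeP_cons (s t : Term F) (L : List (Term F × Term F)) :
    sizeP ((s, t) :: L) = tsize s + tsize t + sizeP L := by
  simp [sizeP]

theorem sizeP_append (A B : List (Term F × Term F)) :
    sizeP (A ++ B) = sizeP A + sizeP B := by
  simp [sizeP]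

theorem occurs_impossible {x : Nat} {t : Term F} {θ : Nat → Term F}
    (hx : x ∈ t.varsL) (hne : t ≠ Term.var x) (hθ : θ x = t.subst θ) : False := by
  obtain ⟨q, hq⟩ := exists_pos_of_mem_varsL hx
  have hq' : q ≠ [] := by
    rintro rfl
    exact hne (subtermAt_nil hq).symm
  have h2 := subtermAt_subst θ hq
  simp only [Term.subst] at h2
  have h3 := tsize_lt_of_subtermAt h2 hq'
  rw [← hθ] at h3
  omega

theorem subst_id_on {t : Term F} {σ : Nat → Term F}
    (h : ∀ x ∈ t.varsL, σ x = Term.var x) : t.subst σ = t := by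
  rw [subst_congr h, subst_var]

theorem zip_to_map_eq {σ : Nat → Term F} :
    ∀ (ss ts : List (Term F)), ss.length = ts.length →
    (∀ pr ∈ ss.zip ts, (pr.1 : Term F).subst σ = (pr.2 : Term F).subst σ) →
    ss.map (Term.subst σ) = ts.map (Term.subst σ) := by
  intro ss
  induction ss with
  | nil => intro ts h _; cases ts with | nil => rfl | cons a as => simp at h
  | cons a as ih =>
    intro ts h hz
    cases ts with
    | nil => simp at h
    | cons b bs =>
      simp only [List.zip_cons_cons] at hz
      simp only [List.map_cons, List.cons.injEq]
      exact ⟨hz (a, b) (by simp), ih bs (by simpa using h)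
        (fun pr hpr => hz pr (by simp [hpr]))⟩

theorem map_eq_to_zip {σ : Nat → Term F} :
    ∀ (ss ts : List (Term F)),
    ss.map (Term.subst σ) = ts.map (Term.subst σ) →
    ∀ pr ∈ ss.zip ts, (pr.1 : Term F).subst σ = (pr.2 : Term F).subst σ := by
  intro ss
  induction ss with
  | nil => intro ts _ pr hpr; simp at hpr
  | cons a as ih =>
    intro ts hm pr hpr
    cases ts with
    | nil => simp at hpr
    | cons b bs =>
      simp only [List.map_cons, List.cons.injEq] at hm
      simp only [List.zip_cons_cons, List.mem_cons] at hpr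
      rcases hpr with rfl | hpr
      · exact hm.1
      · exact ih bs hm.2 pr hpr

theorem sizeP_zip : ∀ (ss ts : List (Term F)), ss.length = ts.length →
    sizeP (ss.zip ts) = (ss.map tsize).sum + (ts.map tsize).sum := by
  intro ss
  induction ss with
  | nil => intro ts h; cases ts with | nil => simp [sizeP] | cons b bs => simp at h
  | cons a as ih =>
    intro ts h
    cases ts with
    | nil => simp at h
    | cons b bs =>
      simp only [List.zip_cons_cons]
      rw [sizeP_cons, ih bs (by simpa using h)]
      simp only [List.map_cons, List.sum_cons]
      omega

theorem unify_main : ∀ (N S : Nat) (L : List (Term F × Term F)) (θ : Nat → Term F),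
    (varsP L).card < N → sizeP L < S → UnifiesL θ L → ∃ σ, MGUL σ L := by
  intro N
  induction N with
  | zero => intro S L θ hc _ _; omega
  | succ N ihN =>
    intro S
    induction S with
    | zero => intro L θ _ hs _; omega
    | succ S ihS =>
      intro L θ hc hs hθ
      -- variable elimination step
      have elim : ∀ (x : Nat) (t : Term F) (L₂ : List (Term F × Term F)) (θ' : Nat → Term F),
          x ∉ t.varsL →
          (varsP ((Term.var x, t) :: L₂)).card < N + 1 →
          UnifiesL θ' ((Term.var x, t) :: L₂) →
          ∃ σ, MGUL σ ((Term.var x, t) :: L₂) := by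
        intro x t L₂ θ' hxt hcard hθ'
        set σ₁ : Nat → Term F := fun z => if z = x then t else Term.var z with hσ₁
        have hθx : θ' x = t.subst θ' := by
          have := hθ' (Term.var x, t) (List.mem_cons_self)
          simpa [Term.subst] using this
        have hcomp : ∀ (τ : Nat → Term F), τ x = t.subst τ →
            ∀ a : Term F, (a.subst σ₁).subst τ = a.subst τ := by
          intro τ hτ a
          rw [subst_subst]
          refine subst_congr ?_
          intro z _
          by_cases hz : z = x
          · subst hz; simp only [hσ₁, if_pos rfl]; exact hτ.symm
          · simp [hσ₁, hz, Term.subst]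
        set L₃ := L₂.map (fun pr => ((pr.1 : Term F).subst σ₁, (pr.2 : Term F).subst σ₁))
          with hL₃
        have hx_not : ∀ y ∈ varsP L₃, y ∈ varsP ((Term.var x, t) :: L₂) ∧ y ≠ x := by
          intro y hy
          obtain ⟨pr', hpr', hy'⟩ := mem_varsP.mp hy
          obtain ⟨⟨a, b⟩, hab, rfl⟩ := List.mem_map.mp hpr'
          have hcase : ∃ c : Term F, (c = a ∨ c = b) ∧ y ∈ (c.subst σ₁).varsL := by
            rcases hy' with h | h
            · exact ⟨a, Or.inl rfl, h⟩
            · exact ⟨b, Or.inr rfl, h⟩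
          obtain ⟨c, hcab, hyc⟩ := hcase
          obtain ⟨z, hz, hyz⟩ := mem_varsL_subst hyc
          by_cases hzx : z = x
          · simp only [hσ₁, if_pos hzx] at hyz
            refine ⟨mem_varsP.mpr ⟨(Term.var x, t), List.mem_cons_self, Or.inr hyz⟩, ?_⟩
            rintro rfl; exact hxt hyz
          · simp only [hσ₁, if_neg hzx, Term.varsL, List.mem_singleton] at hyz
            subst hyz
            refine ⟨mem_varsP.mpr ⟨(a, b), List.mem_cons_of_mem _ hab, ?_⟩, hzx⟩
            rcases hcab with rfl | rfl
            · exact Or.inl hz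
            · exact Or.inr hz
        have hxmem : x ∈ varsP ((Term.var x, t) :: L₂) :=
          mem_varsP.mpr ⟨(Term.var x, t), List.mem_cons_self,
            Or.inl (by simp [Term.varsL])⟩
        have hcard3 : (varsP L₃).card < N := by
          have h1 : varsP L₃ ⊆ (varsP ((Term.var x, t) :: L₂)).erase x := fun y hy =>
            Finset.mem_erase.mpr ⟨(hx_not y hy).2, (hx_not y hy).1⟩
          have h2 := Finset.card_le_card h1
          have h3 := Finset.card_erase_lt_of_mem hxmem
          omega
        have unifL₃ : ∀ τ : Nat → Term F, UnifiesL τ ((Term.var x, t) :: L₂) →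
            UnifiesL τ L₃ := by
          intro τ hτ pr hpr
          have hτx' : τ x = t.subst τ := by
            have := hτ (Term.var x, t) (List.mem_cons_self)
            simpa [Term.subst] using this
          obtain ⟨⟨a, b⟩, hab, rfl⟩ := List.mem_map.mp hpr
          simp only
          rw [hcomp τ hτx' a, hcomp τ hτx' b]
          exact hτ (a, b) (List.mem_cons_of_mem _ hab)
        obtain ⟨σr, hσr1, hσr2⟩ :=
          ihN (sizeP L₃ + 1) L₃ θ' hcard3 (by omega) (unifL₃ θ' hθ')
        have htσ₁ : t.subst σ₁ = t := by
          refine subst_id_on (fun z hz => ?_)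
          have hzx : z ≠ x := fun h => hxt (h ▸ hz)
          simp [hσ₁, hzx]
        refine ⟨fun z => (σ₁ z).subst σr, ?_, ?_⟩
        · intro pr hpr
          rcases List.mem_cons.mp hpr with heq | hpr'
          · subst heq
            show (Term.var x).subst _ = t.subst _
            have h1 : (Term.var x).subst (fun z => (σ₁ z).subst σr) = t.subst σr := by
              simp [Term.subst, hσ₁]
            have h2 : t.subst (fun z => (σ₁ z).subst σr) = (t.subst σ₁).subst σr :=
              (subst_subst t σ₁ σr).symm
            rw [h1, h2, htσ₁]
          · have ha : ((pr.1 : Term F).subst σ₁, (pr.2 : Term F).subst σ₁) ∈ L₃ :=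
              List.mem_map_of_mem hpr'
            have h4 := hσr1 _ ha
            simp only at h4
            show pr.1.subst _ = pr.2.subst _
            rw [← subst_subst, ← subst_subst]
            exact h4
        · intro τ hτ
          have hτx' : τ x = t.subst τ := by
            have := hτ (Term.var x, t) (List.mem_cons_self)
            simpa [Term.subst] using this
          obtain ⟨δ, hδ⟩ := hσr2 τ (unifL₃ τ hτ)
          refine ⟨δ, fun z => ?_⟩
          rw [subst_subst]
          have h5 : (σ₁ z).subst (fun w => (σr w).subst δ) = (σ₁ z).subst τ :=
            subst_congr (fun w _ => (hδ w).symm)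
          rw [h5]
          by_cases hz : z = x
          · subst hz; simp only [hσ₁, if_pos rfl]; exact hτx'
          · simp [hσ₁, hz, Term.subst]
      -- now the case analysis on the first pair
      match L with
      | [] =>
        exact ⟨Term.var, fun pr hpr => by simp at hpr,
          fun τ _ => ⟨τ, fun x => by simp [Term.subst]⟩⟩
      | (s, t) :: L' =>
        have hθ1 : s.subst θ = t.subst θ := hθ (s, t) (List.mem_cons_self)
        cases s with
        | var x =>
          by_cases hocc : x ∈ t.varsL
          · by_cases hteq : t = Term.var x
            · -- drop the trivial pair
              subst hteq
              have hsub' : varsP L' ⊆ varsP ((Term.var x, Term.var x) :: L') := by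
                intro y hy
                obtain ⟨pr, hpr, h⟩ := mem_varsP.mp hy
                exact mem_varsP.mpr ⟨pr, List.mem_cons_of_mem _ hpr, h⟩
              have hc' : (varsP L').card < N + 1 := by
                have := Finset.card_le_card hsub'; omega
              have hs' : sizeP L' < S := by
                rw [sizeP_cons] at hs
                have := tsize_pos (Term.var (F := F) x); omega
              obtain ⟨σ', h1, h2⟩ := ihS L' θ hc' hs'
                (fun pr hpr => hθ pr (List.mem_cons_of_mem _ hpr))
              refine ⟨σ', fun pr hpr => ?_, fun τ hτ => h2 τ
                (fun pr hpr => hτ pr (List.mem_cons_of_mem _ hpr))⟩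
              rcases List.mem_cons.mp hpr with heq | hpr'
              · subst heq; rfl
              · exact h1 pr hpr'
            · exact (occurs_impossible hocc hteq
                (by simpa [Term.subst] using hθ1)).elim
          · exact elim x t L' θ hocc hc hθ
        | app f ss =>
          cases t with
          | var y =>
            by_cases hocc : y ∈ (Term.app f ss).varsL
            · exact (occurs_impossible (θ := θ) hocc (by simp)
                (by simpa [Term.subst] using hθ1.symm)).elim
            · have hcs : (varsP ((Term.var y, Term.app f ss) :: L')).card < N + 1 := by
                have : varsP ((Term.var y, Term.app f ss) :: L') =
                    varsP ((Term.app f ss, Term.var y) :: L') := by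
                  apply Finset.ext
                  intro z
                  rw [mem_varsP, mem_varsP]
                  constructor
                  · rintro ⟨pr, hpr, h⟩
                    rcases List.mem_cons.mp hpr with heq | hpr'
                    · subst heq
                      exact ⟨(Term.app f ss, Term.var y), List.mem_cons_self, h.symm⟩
                    · exact ⟨pr, List.mem_cons_of_mem _ hpr', h⟩
                  · rintro ⟨pr, hpr, h⟩
                    rcases List.mem_cons.mp hpr with heq | hpr'
                    · subst heq
                      exact ⟨(Term.var y, Term.app f ss), List.mem_cons_self, h.symm⟩
                    · exact ⟨pr, List.mem_cons_of_mem _ hpr', h⟩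
                rw [this]; exact hc
              have hθs : UnifiesL θ ((Term.var y, Term.app f ss) :: L') := by
                intro pr hpr
                rcases List.mem_cons.mp hpr with heq | hpr'
                · subst heq; exact hθ1.symm
                · exact hθ pr (List.mem_cons_of_mem _ hpr')
              obtain ⟨σ, h1, h2⟩ := elim y (Term.app f ss) L' θ hocc hcs hθs
              refine ⟨σ, fun pr hpr => ?_, fun τ hτ => h2 τ ?_⟩
              · rcases List.mem_cons.mp hpr with heq | hpr'
                · subst heq
                  exact (h1 (Term.var y, Term.app f ss) (List.mem_cons_self)).symm
                · exact h1 pr (List.mem_cons_of_mem _ hpr')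
              · intro pr hpr
                rcases List.mem_cons.mp hpr with heq | hpr'
                · subst heq
                  exact (hτ (Term.app f ss, Term.var y) (List.mem_cons_self)).symm
                · exact hτ pr (List.mem_cons_of_mem _ hpr')
          | app g ts =>
            rw [subst_app, subst_app] at hθ1
            have hfg : f = g := by injection hθ1
            have hmap : ss.map (Term.subst θ) = ts.map (Term.subst θ) := by injection hθ1
            subst hfg
            have hlen : ss.length = ts.length := by
              have := congrArg List.length hmap
              simpa using this
            set L₃ := ss.zip ts ++ L' with hL₃
            have hsize3 : sizeP L₃ < S := by
              rw [hL₃, sizeP_append, sizeP_zip ss ts hlen]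
              rw [sizeP_cons, tsize_app, tsize_app] at hs
              omega
            have hvars3 : (varsP L₃).card < N + 1 := by
              have hsub3 : varsP L₃ ⊆ varsP ((Term.app f ss, Term.app f ts) :: L') := by
                intro z hz
                obtain ⟨pr, hpr, h⟩ := mem_varsP.mp hz
                rcases List.mem_append.mp hpr with hzip | hL'
                · have hmem := List.of_mem_zip hzip
                  refine mem_varsP.mpr ⟨(Term.app f ss, Term.app f ts),
                    List.mem_cons_self, ?_⟩
                  rcases h with h | h
                  · exact Or.inl (mem_varsL_app.mpr ⟨pr.1, hmem.1, h⟩)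
                  · exact Or.inr (mem_varsL_app.mpr ⟨pr.2, hmem.2, h⟩)
                · exact mem_varsP.mpr ⟨pr, List.mem_cons_of_mem _ hL', h⟩
              have := Finset.card_le_card hsub3; omega
            have hθ3 : UnifiesL θ L₃ := by
              intro pr hpr
              rcases List.mem_append.mp hpr with hzip | hL'
              · exact map_eq_to_zip ss ts hmap pr hzip
              · exact hθ pr (List.mem_cons_of_mem _ hL')
            obtain ⟨σr, h1, h2⟩ := ihS L₃ θ hvars3 hsize3 hθ3
            refine ⟨σr, fun pr hpr => ?_, fun τ hτ => h2 τ ?_⟩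
            · rcases List.mem_cons.mp hpr with heq | hpr'
              · subst heq
                show (Term.app f ss).subst σr = (Term.app f ts).subst σr
                rw [subst_app, subst_app]
                congr 1
                exact zip_to_map_eq ss ts hlen
                  (fun pr hpr => h1 pr (List.mem_append.mpr (Or.inl hpr)))
              · exact h1 pr (List.mem_append.mpr (Or.inr hpr'))
            · intro pr hpr
              rcases List.mem_append.mp hpr with hzip | hL'
              · have hτ1 := hτ (Term.app f ss, Term.app f ts) (List.mem_cons_self)
                rw [subst_app, subst_app] at hτ1
                have hmapτ : ss.map (Term.subst τ) = ts.map (Term.subst τ) := by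
                  injection hτ1
                exact map_eq_to_zip ss ts hmapτ pr hzip
              · exact hτ pr (List.mem_cons_of_mem _ hL')

theorem mgu_exists {s t : Term F} {θ : Nat → Term F} (h : s.subst θ = t.subst θ) :
    ∃ σ, IsMGU σ s t := by
  obtain ⟨σ, h1, h2⟩ := unify_main ((varsP [(s, t)]).card + 1) (sizeP [(s, t)] + 1)
    [(s, t)] θ (by omega) (by omega)
    (fun pr hpr => by simp at hpr; subst hpr; exact h)
  refine ⟨σ, h1 (s, t) (by simp), fun τ hτ => h2 τ ?_⟩
  intro pr hpr
  simp at hpr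
  subst hpr
  exact hτ

end NoSup

open NoSup

/-- LM-systems have no non-overlay superpositions: no proper non-variable
subterm of a lhs is unifiable with a lhs (common-instance formulation, covering
renamed-apart copies); hence NOSUP(R) = ∅. -/
theorem no_nonoverlay_superpositions {F : Type} (R : TRS F) (hlm : LMSystem R)
    (e1 e2 : Rule F) (h1 : e1 ∈ R) (h2 : e2 ∈ R)
    (p : List Nat) (u : Term F)
    (hp : p ≠ []) (hsub : SubtermAt e1.1 p u) (hnv : ¬ u.IsVar) :
    ¬ ∃ (σ τ : Nat → Term F), u.subst σ = e2.1.subst τ := by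
  classical
  rintro ⟨σ0, τ0, heq0⟩
  obtain ⟨hconf, hterm⟩ := hlm.convergent
  have qD1 := hlm.quasiDet.1
  have qD2 := hlm.quasiDet.2.1
  have qD3 := hlm.quasiDet.2.2
  have hnvl : ∀ l r : Term F, (l, r) ∈ R → ¬ l.IsVar ∧ ¬ r.IsVar :=
    fun l r h => qD1 (l, r) (Set.mem_union_left _ h)
  have hrootne : ∀ l r : Term F, (l, r) ∈ R → l.root ≠ r.root :=
    fun l r h => qD2 (l, r) (Set.mem_union_left _ h)
  have hlhs_nonvar : ∀ e ∈ R, ¬ (e : Rule F).1.IsVar := fun e he => (qD1 e (Set.mem_union_left _ he)).1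
  -- the normal form function
  choose nf hnf using NoSup.nfof_exists hterm
  have nf_eq : ∀ {s n : Term F}, StarRW R s n → NormalForm R n → nf s = n :=
    fun hsn hn => NoSup.nfof_unique hconf (hnf _) ⟨hsn, hn⟩
  have nf_star_eq : ∀ {s t : Term F}, StarRW R s t → nf s = nf t :=
    fun hst => NoSup.nfof_unique hconf (hnf _) ⟨hst.trans (hnf _).1, (hnf _).2⟩
  -- forward closure at the root of an innermost redex
  have fcRoot : ∀ s : Term F, EpsIrreducible R s → ¬ NormalForm R s →
      ∃ l r : Term F, (l, r) ∈ R ∧ ∃ γ : Nat → Term F,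
        s = l.subst γ ∧ nf s = r.subst γ := by
    intro s heps hred
    have hstep := hlm.forwardClosed s ⟨heps, hred⟩ (nf s) (hnf s)
    obtain ⟨⟨l₄, r₄⟩, h4, γ, q4, hs4, hr4⟩ := hstep
    cases q4 with
    | cons i q' =>
      exact absurd (NoSup.rootStep_self h4 γ)
        ((heps _ _ hs4 (by simp)) _)
    | nil =>
      exact ⟨l₄, r₄, h4, γ, (NoSup.subtermAt_nil hs4).symm, NoSup.replaceAt_nil hr4⟩
  -- the set of "bad" terms: common instances of a proper non-variable subterm
  -- of a lhs and of a lhs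
  set Bad : Set (Term F) :=
    { c | ∃ (lc rc : Term F) (pc : List Nat) (uc l₅ r₅ : Term F) (σ' τ' : Nat → Term F),
        (lc, rc) ∈ R ∧ (l₅, r₅) ∈ R ∧ pc ≠ [] ∧ ¬ uc.IsVar ∧ SubtermAt lc pc uc ∧
        uc.subst σ' = l₅.subst τ' ∧ c = uc.subst σ' } with hBad
  have hBadNe : Bad.Nonempty := by
    refine ⟨u.subst σ0, e1.1, e1.2, p, u, e2.1, e2.2, σ0, τ0, ?_, ?_, hp, hnv, hsub, heq0, rfl⟩
    · simpa using h1
    · simpa using h2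
  obtain ⟨c0, hc0, hmin⟩ := (NoSup.wf_below hterm).has_min Bad hBadNe
  obtain ⟨l₁, r₁, p₁, u₁, l₂, r₂, σ, τ, hl₁, hl₂, hp₁, hnv₁, hsub₁, hunif, hceq⟩ := hc0
  -- basic consequences
  have hc0l₂ : c0 = l₂.subst τ := hceq.trans hunif
  -- generic normalisation lemma for instances of proper subterms of lhss
  have Fgen : ∀ (lc rc : Term F), (lc, rc) ∈ R → ∀ (q : List Nat) (b : Term F)
      (θ' : Nat → Term F), SubtermAt lc q b → q ≠ [] →
      Below R (b.subst θ') c0 →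
      NormalForm R (b.subst (fun x => nf (θ' x))) ∧
        nf (b.subst θ') = b.subst (fun x => nf (θ' x)) := by
    intro lc rc hlc q b θ' hsubb hq hbelow
    have hstar : StarRW R (b.subst θ') (b.subst (fun x => nf (θ' x))) :=
      NoSup.star_subst_point (fun x => (hnf (θ' x)).1) b
    have hNF : NormalForm R (b.subst (fun x => nf (θ' x))) := by
      by_contra hred
      simp only [NormalForm, not_forall, not_not] at hred
      obtain ⟨w', ⟨⟨l₅, r₅⟩, h5, δ, qs, hsubs, -⟩⟩ := hred
      rcases NoSup.subtermAt_subst_decomp hsubs with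
        ⟨w, hw, hwnv, heqw⟩ | ⟨x, q₁, q₂, hx, -, hσx⟩
      · have hb1 : Below R (b.subst (fun x => nf (θ' x))) c0 :=
          NoSup.below_star_trans hstar hbelow
        have hbelow2 : Below R (w.subst (fun x => nf (θ' x))) c0 := by
          by_cases hqs : qs = []
          · subst hqs
            rw [(NoSup.subtermAt_nil hw : w = b)]
            exact hb1
          · exact (NoSup.below_of_subT ⟨qs, hqs, heqw ▸ hsubs⟩).trans hb1
        refine hmin (w.subst (fun x => nf (θ' x)))
          ⟨lc, rc, q ++ qs, w, l₅, r₅, (fun x => nf (θ' x)), δ, hlc, h5,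
            (fun hcc => hq (List.append_eq_nil_iff.mp hcc).1), hwnv,
            NoSup.subtermAt_trans hsubb hw, heqw.symm, rfl⟩ hbelow2
      · exact NoSup.redex_not_nf h5 δ
          (NoSup.normalForm_subterm (hnf (θ' x)).2 hσx)
    exact ⟨hNF, nf_eq hstar hNF⟩
  -- normalisation commutes with the common instance (Lemma G)
  have Glem : ∀ (n : Nat) (a b : Term F) (qa qb : List Nat), tsize a ≤ n →
      SubtermAt u₁ qa a → SubtermAt l₂ qb b → a.subst σ = b.subst τ →
      a.subst (fun x => nf (σ x)) = b.subst (fun x => nf (τ x)) := by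
    intro n
    induction n with
    | zero => intro a _ _ _ ha _ _ _; have := NoSup.tsize_pos a; omega
    | succ n ih =>
      intro a b qa qb hsz hsuba hsubb hab
      have hqa_ne : ¬ a.IsVar → True := fun _ => trivial
      cases a with
      | var x =>
        have hqa : qa ≠ [] := by
          intro hqa
          subst hqa
          have : Term.var x = u₁ := NoSup.subtermAt_nil hsuba
          rw [← this] at hnv₁
          exact hnv₁ trivial
        cases b with
        | var y =>
          simp only [NoSup.var_subst] at hab ⊢
          rw [hab]
        | app g bs =>
          have hqb : qb ≠ [] := by
            intro hqb
            subst hqb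
            have hbl₂ : Term.app g bs = l₂ := NoSup.subtermAt_nil hsubb
            -- then σ x = c0, but σ x is a proper subterm of c0
            have h1 : SubtermAt c0 qa (σ x) := by
              have := NoSup.subtermAt_subst σ hsuba
              rw [NoSup.var_subst] at this
              rw [← hceq] at this
              exact this
            have h2 : σ x = c0 := by
              rw [NoSup.var_subst] at hab
              rw [hab, hbl₂, ← hc0l₂]
            have := NoSup.tsize_lt_of_subtermAt h1 hqa
            rw [h2] at this
            omega
          have hbelow : Below R ((Term.app g bs).subst τ) c0 := by
            refine NoSup.below_of_subT ⟨qb, hqb, ?_⟩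
            rw [hc0l₂]
            exact NoSup.subtermAt_subst τ hsubb
          obtain ⟨hNFb, hnfb⟩ := Fgen l₂ r₂ hl₂ qb (Term.app g bs) τ hsubb hqb hbelow
          rw [NoSup.var_subst] at hab
          rw [NoSup.var_subst, ← hnfb, ← hab]
      | app f as =>
        cases b with
        | var y =>
          have hqb : qb ≠ [] := by
            intro hqb
            subst hqb
            have : Term.var y = l₂ := NoSup.subtermAt_nil hsubb
            have h2 := (hnvl _ _ hl₂).1
            rw [← this] at h2
            exact h2 trivial
          by_cases hqa : qa = []
          · -- a = u₁, so τ y = c0, contradiction with properness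
            subst hqa
            have hau : Term.app f as = u₁ := NoSup.subtermAt_nil hsuba
            have h1 : SubtermAt c0 qb (τ y) := by
              have := NoSup.subtermAt_subst τ hsubb
              rw [NoSup.var_subst] at this
              rw [← hc0l₂] at this
              exact this
            have h2 : τ y = c0 := by
              rw [NoSup.var_subst] at hab
              rw [← hab, hau, ← hceq]
            have := NoSup.tsize_lt_of_subtermAt h1 hqb
            rw [h2] at this
            omega
          · have hbelow : Below R ((Term.app f as).subst σ) c0 := by
              refine NoSup.below_of_subT ⟨qa, hqa, ?_⟩
              rw [hceq]
              exact NoSup.subtermAt_subst σ hsuba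
            obtain ⟨hNFa, hnfa⟩ := Fgen l₁ r₁ hl₁ (p₁ ++ qa) (Term.app f as) σ
              (NoSup.subtermAt_trans hsub₁ hsuba)
              (fun hcc => hp₁ (List.append_eq_nil_iff.mp hcc).1) hbelow
            rw [NoSup.var_subst] at hab
            rw [NoSup.var_subst, ← hnfa, hab]
        | app g bs =>
          rw [NoSup.subst_app, NoSup.subst_app] at hab
          have hfg : f = g := by injection hab
          have hmapeq : as.map (Term.subst σ) = bs.map (Term.subst τ) := by injection hab
          subst hfg
          have hlen : as.length = bs.length := by
            have := congrArg List.length hmapeq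
            simpa using this
          rw [NoSup.subst_app, NoSup.subst_app]
          congr 1
          apply List.ext_getElem?
          intro i
          rcases has : as[i]? with _ | ai
          · have hlena : as.length ≤ i := List.getElem?_eq_none_iff.mp has
            have : bs[i]? = none := List.getElem?_eq_none_iff.mpr (hlen ▸ hlena)
            rw [List.getElem?_map, List.getElem?_map, has, this]
            rfl
          · have hilt : i < as.length := (List.getElem?_eq_some_iff.mp has).1
            rcases hbs : bs[i]? with _ | bi
            · have := List.getElem?_eq_none_iff.mp hbs
              omega
            · have hpoint : ai.subst σ = bi.subst τ := by
                have := congrArg (fun l => l[i]?) hmapeq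
                simp only [List.getElem?_map, has, hbs, Option.map_some] at this
                exact Option.some.inj this
              have hsz' : tsize ai ≤ n := by
                have := NoSup.tsize_lt_of_mem (List.mem_of_getElem? has) f
                omega
              have hrec := ih ai bi (qa ++ [i]) (qb ++ [i]) hsz'
                (NoSup.subtermAt_trans hsuba (SubtermAt.there has (SubtermAt.here _)))
                (NoSup.subtermAt_trans hsubb (SubtermAt.there hbs (SubtermAt.here _)))
                hpoint
              rw [List.getElem?_map, List.getElem?_map, has, hbs]
              simp only [Option.map_some]
              exact congrArg some hrec
  -- apply Glem at the root
  have hG : u₁.subst (fun x => nf (σ x)) = l₂.subst (fun x => nf (τ x)) :=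
    Glem (tsize u₁) u₁ l₂ [] [] le_rfl (SubtermAt.here _) (SubtermAt.here _) hunif
  have hstar01 : StarRW R c0 (u₁.subst (fun x => nf (σ x))) := by
    rw [hceq]
    exact NoSup.star_subst_point (fun x => (hnf (σ x)).1) u₁
  have hc1Bad : (u₁.subst (fun x => nf (σ x))) ∈ Bad :=
    ⟨l₁, r₁, p₁, u₁, l₂, r₂, (fun x => nf (σ x)), (fun x => nf (τ x)),
      hl₁, hl₂, hp₁, hnv₁, hsub₁, hG, rfl⟩
  have hc1eq : u₁.subst (fun x => nf (σ x)) = c0 := by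
    by_contra hne
    exact hmin _ hc1Bad (NoSup.below_of_star_ne hstar01 hne)
  -- σ is normalised on the variables of u₁
  have hσNF : ∀ x ∈ u₁.varsL, NormalForm R (σ x) := by
    intro x hx
    obtain ⟨q, hq⟩ := NoSup.exists_pos_of_mem_varsL hx
    have h1 : SubtermAt c0 q (σ x) := by
      have := NoSup.subtermAt_subst σ hq
      rw [NoSup.var_subst] at this
      rw [← hceq] at this
      exact this
    have h2 : SubtermAt c0 q (nf (σ x)) := by
      have := NoSup.subtermAt_subst (fun x => nf (σ x)) hq
      rw [NoSup.var_subst] at this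
      rw [hc1eq] at this
      exact this
    have h3 := NoSup.subtermAt_det h1 h2
    rw [h3]
    exact (hnf (σ x)).2
  -- c0 is an innermost redex
  have hredc0 : ¬ NormalForm R c0 := by
    rw [hc0l₂]
    exact NoSup.redex_not_nf hl₂ τ
  have hepsc0 : EpsIrreducible R c0 := by
    intro q v hsubv hq
    by_contra hv
    simp only [NormalForm, not_forall, not_not] at hv
    obtain ⟨w', ⟨⟨l₅, r₅⟩, h5, δ, q', hsub', -⟩⟩ := hv
    have hsubc : SubtermAt c0 (q ++ q') (l₅.subst δ) := NoSup.subtermAt_trans hsubv hsub'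
    have hqq' : q ++ q' ≠ [] := fun hcc => hq (List.append_eq_nil_iff.mp hcc).1
    rw [hceq] at hsubc
    rcases NoSup.subtermAt_subst_decomp hsubc with
      ⟨w, hw, hwnv, heqw⟩ | ⟨x, q₁, q₂, hx, -, hσx⟩
    · refine hmin (w.subst σ)
        ⟨l₁, r₁, p₁ ++ (q ++ q'), w, l₅, r₅, σ, δ, hl₁, h5,
          (fun hcc => hp₁ (List.append_eq_nil_iff.mp hcc).1), hwnv,
          NoSup.subtermAt_trans hsub₁ hw, heqw.symm, rfl⟩ ?_
      refine NoSup.below_of_subT ⟨q ++ q', hqq', ?_⟩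
      rw [hceq, ← heqw]
      exact hsubc
    · have hxmem : x ∈ u₁.varsL := NoSup.mem_varsL_of_subtermAt hx (by simp [Term.varsL])
      exact NoSup.redex_not_nf h5 δ
        (NoSup.normalForm_subterm (hσNF x hxmem) hσx)
  -- forward closure applied to c0
  obtain ⟨l₄, r₄, h4, γ, hc0l₄, hnfc0⟩ := fcRoot c0 hepsc0 hredc0
  obtain ⟨f₄, ls₄, hl₄app⟩ := NoSup.not_isVar_iff.mp (hnvl _ _ h4).1
  obtain ⟨g₄, rs₄, hr₄app⟩ := NoSup.not_isVar_iff.mp (hnvl _ _ h4).2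
  have hroot_c0 : c0.root = l₄.root := by rw [hc0l₄, NoSup.root_subst (hnvl _ _ h4).1]
  have hroot_that : (nf c0).root = r₄.root := by rw [hnfc0, NoSup.root_subst (hnvl _ _ h4).2]
  have hroot_u₁ : u₁.root = c0.root := by
    rw [hceq, NoSup.root_subst hnv₁]
  -- the normalised substitution σ̃
  have hsigTNF : ∀ x : Nat, NormalForm R (if x ∈ u₁.varsL then σ x else Term.var x) := by
    intro x
    by_cases hx : x ∈ u₁.varsL
    · simpa [hx] using hσNF x hx
    · simpa [hx] using NoSup.var_normalForm hlhs_nonvar x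
  have husigT : u₁.subst (fun x => if x ∈ u₁.varsL then σ x else Term.var x) = c0 := by
    have heq2 : u₁.subst (fun x => if x ∈ u₁.varsL then σ x else Term.var x) = u₁.subst σ :=
      NoSup.subst_congr (fun x hx => by simp [hx])
    rw [heq2, ← hceq]
  -- Lemma C : normal forms of instances along the path cannot be pattern instances
  have Clem : ∀ (pl : List Nat) (v : Term F), SubtermAt v pl u₁ →
      ∀ δ : Nat → Term F, (∀ x ∈ v.varsL, NormalForm R (δ x)) →
      nf (v.subst (fun x => if x ∈ u₁.varsL then σ x else Term.var x)) ≠ v.subst δ := by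
    intro pl
    induction pl with
    | nil =>
      intro v hsubv δ hδ hEq
      have hvu : u₁ = v := NoSup.subtermAt_nil hsubv
      subst hvu
      rw [husigT] at hEq
      have hr1 : (nf c0).root = (u₁.subst δ).root := by rw [hEq]
      rw [hroot_that, NoSup.root_subst hnv₁, hroot_u₁, hroot_c0] at hr1
      exact hrootne _ _ h4 hr1.symm
    | cons j pl' ih =>
      intro v hsubv δ hδ hEq
      cases v with
      | var m => cases hsubv
      | app g vs =>
        obtain ⟨v', hget', hsub'⟩ := NoSup.subtermAt_cons hsubv
        -- below-root normalisation of the instance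
        have hstarlow : StarRW R
            ((Term.app g vs).subst (fun x => if x ∈ u₁.varsL then σ x else Term.var x))
            (Term.app g ((vs.map (Term.subst (fun x => if x ∈ u₁.varsL then σ x else Term.var x))).map nf)) := by
          rw [NoSup.subst_app]
          exact NoSup.star_app
            (List.forall₂_map_right_iff.mpr (List.forall₂_same.mpr fun t _ => (hnf t).1)) g
        have heps : EpsIrreducible R
            (Term.app g ((vs.map (Term.subst (fun x => if x ∈ u₁.varsL then σ x else Term.var x))).map nf)) := by
          intro q w hsubw hq
          cases q with
          | nil => exact absurd rfl hq
          | cons i q'' =>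
            obtain ⟨m, hm, hsubm⟩ := NoSup.subtermAt_cons hsubw
            rw [List.getElem?_map] at hm
            rcases hcs : (vs.map (Term.subst (fun x => if x ∈ u₁.varsL then σ x else Term.var x)))[i]? with _ | c
            · rw [hcs] at hm; cases hm
            · rw [hcs] at hm
              cases hm
              exact NoSup.normalForm_subterm (hnf c).2 hsubm
        by_cases hlownf : NormalForm R
            (Term.app g ((vs.map (Term.subst (fun x => if x ∈ u₁.varsL then σ x else Term.var x))).map nf))
        · have hnfceq := nf_eq hstarlow hlownf
          rw [hEq] at hnfceq
          -- component extraction at index j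
          rw [NoSup.subst_app] at hnfceq
          have hlist : (vs.map (Term.subst δ)) =
              ((vs.map (Term.subst (fun x => if x ∈ u₁.varsL then σ x else Term.var x))).map nf) := by
            injection hnfceq
          have hcomp := congrArg (fun l => l[j]?) hlist
          simp only [List.getElem?_map, hget', Option.map_some] at hcomp
          have hji : v'.subst δ =
              nf (v'.subst (fun x => if x ∈ u₁.varsL then σ x else Term.var x)) :=
            Option.some.inj hcomp
          refine ih v' hsub' δ (fun x hx => hδ x ?_) hji.symm
          exact NoSup.mem_varsL_app.mpr ⟨v', List.mem_of_getElem? hget', hx⟩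
        · obtain ⟨l₉, r₉, h9, γ₉, hlow9, hnf9⟩ := fcRoot _ heps hlownf
          have hnv9 := hnvl _ _ h9
          have hnfc : (Term.app g vs).subst δ = r₉.subst γ₉ := by
            rw [← hEq, nf_star_eq hstarlow, hnf9]
          have hr : (Term.app g vs).root = r₉.root := by
            have hcg := congrArg Term.root hnfc
            rwa [NoSup.root_subst (show ¬ (Term.app g vs).IsVar by simp [Term.IsVar]) δ,
              NoSup.root_subst hnv9.2 γ₉] at hcg
          have hl : some g = l₉.root := by
            have hcg := congrArg Term.root hlow9
            rwa [NoSup.root_subst hnv9.1 γ₉] at hcg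
          exact hrootne _ _ h9 (hl.symm.trans hr)

  -- ## the endgame: the peak at l₁
  obtain ⟨f₁, ls, hl₁app⟩ := NoSup.not_isVar_iff.mp (hnvl _ _ hl₁).1
  obtain ⟨g₁, rs, hr₁app⟩ := NoSup.not_isVar_iff.mp (hnvl _ _ hl₁).2
  have hf₁g₁ : (some f₁ : Option F) ≠ some g₁ := by
    have := hrootne _ _ hl₁
    rwa [hl₁app, hr₁app] at this
  -- the peak
  have hstepA : OneStep R
      (l₁.subst (fun x => if x ∈ u₁.varsL then σ x else Term.var x))
      (r₁.subst (fun x => if x ∈ u₁.varsL then σ x else Term.var x)) :=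
    NoSup.rootStep_self hl₁ _
  have hnfsA : nf (l₁.subst (fun x => if x ∈ u₁.varsL then σ x else Term.var x)) =
      nf (r₁.subst (fun x => if x ∈ u₁.varsL then σ x else Term.var x)) :=
    nf_star_eq (Relation.ReflTransGen.single hstepA)
  -- generic facts about the below-root normalisation
  have lowStar : ∀ (f : F) (cs : List (Term F)),
      StarRW R (Term.app f cs) (Term.app f (cs.map nf)) := fun f cs =>
    NoSup.star_app (List.forall₂_map_right_iff.mpr
      (List.forall₂_same.mpr fun t _ => (hnf t).1)) f
  have lowEps : ∀ (f : F) (cs : List (Term F)),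
      EpsIrreducible R (Term.app f (cs.map nf)) := by
    intro f cs q w hsubw hq
    cases q with
    | nil => exact absurd rfl hq
    | cons i q'' =>
      obtain ⟨m, hm, hsubm⟩ := NoSup.subtermAt_cons hsubw
      rw [List.getElem?_map] at hm
      rcases hcs : cs[i]? with _ | c
      · rw [hcs] at hm; cases hm
      · rw [hcs] at hm
        cases hm
        exact NoSup.normalForm_subterm (hnf c).2 hsubm
  -- the two below-root normal forms
  have hsstar : StarRW R (l₁.subst (fun x => if x ∈ u₁.varsL then σ x else Term.var x))
      (Term.app f₁ ((ls.map (Term.subst (fun x => if x ∈ u₁.varsL then σ x else Term.var x))).map nf)) := by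
    rw [hl₁app, NoSup.subst_app]
    exact lowStar _ _
  have hAstar : StarRW R (r₁.subst (fun x => if x ∈ u₁.varsL then σ x else Term.var x))
      (Term.app g₁ ((rs.map (Term.subst (fun x => if x ∈ u₁.varsL then σ x else Term.var x))).map nf)) := by
    rw [hr₁app, NoSup.subst_app]
    exact lowStar _ _
  by_cases hsHat : NormalForm R
      (Term.app f₁ ((ls.map (Term.subst (fun x => if x ∈ u₁.varsL then σ x else Term.var x))).map nf))
  · -- ŝ is a normal form, hence equals nf s*
    have hsHatEq := nf_eq hsstar hsHat
    by_cases haHat : NormalForm R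
        (Term.app g₁ ((rs.map (Term.subst (fun x => if x ∈ u₁.varsL then σ x else Term.var x))).map nf))
    · -- both normal forms: same normal form with different roots
      have haHatEq := nf_eq hAstar haHat
      have : Term.app f₁ ((ls.map (Term.subst (fun x => if x ∈ u₁.varsL then σ x else Term.var x))).map nf)
          = Term.app g₁ ((rs.map (Term.subst (fun x => if x ∈ u₁.varsL then σ x else Term.var x))).map nf) := by
        rw [← hsHatEq, ← haHatEq, hnfsA]
      have h9 : f₁ = g₁ := by injection this
      exact hf₁g₁ (congrArg some h9)
    · -- Â is reducible: root forward-closure step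
      obtain ⟨l₅, r₅, h5, δ₅, haHat5, hnfaHat5⟩ := fcRoot _ (lowEps _ _) haHat
      have hnv5 := hnvl _ _ h5
      have hl₅root : l₅.root = some g₁ := by
        have := congrArg Term.root haHat5
        rw [NoSup.root_subst hnv5.1 δ₅] at this
        exact this.symm
      have hr₅root : r₅.root = some f₁ := by
        have h6 : nf (Term.app g₁ ((rs.map (Term.subst (fun x => if x ∈ u₁.varsL then σ x else Term.var x))).map nf))
            = Term.app f₁ ((ls.map (Term.subst (fun x => if x ∈ u₁.varsL then σ x else Term.var x))).map nf) := by
          rw [← nf_star_eq hAstar, ← hnfsA, hsHatEq]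
        rw [hnfaHat5] at h6
        have := congrArg Term.root h6
        rwa [NoSup.root_subst hnv5.2 δ₅] at this
      have hsim : RootPairSimilar (l₅, r₅) (l₁, r₁) := by
        refine Or.inr ⟨?_, ?_⟩
        · simp only
          rw [hl₅root, hr₁app]; rfl
        · simp only
          rw [hr₅root, hl₁app]; rfl
      have hne : (l₅, r₅) ≠ (l₁, r₁) := by
        intro hcc
        have : l₅ = l₁ := congrArg Prod.fst hcc
        rw [this, hl₁app] at hl₅root
        exact hf₁g₁ hl₅root
      exact qD3 (l₅, r₅) (Set.mem_union_left _ h5) (l₁, r₁)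
        (Set.mem_union_left _ hl₁) hne hsim
  · -- ŝ is reducible: root forward-closure step
    obtain ⟨l₆, r₆, h6, δ₆, hsHat6, hnfsHat6⟩ := fcRoot _ (lowEps _ _) hsHat
    have hnv6 := hnvl _ _ h6
    have hl₆root : l₆.root = some f₁ := by
      have := congrArg Term.root hsHat6
      rw [NoSup.root_subst hnv6.1 δ₆] at this
      exact this.symm
    have hnfsHatEq : nf (l₁.subst (fun x => if x ∈ u₁.varsL then σ x else Term.var x)) = r₆.subst δ₆ := by
      rw [nf_star_eq hsstar, hnfsHat6]
    by_cases haHat : NormalForm R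
        (Term.app g₁ ((rs.map (Term.subst (fun x => if x ∈ u₁.varsL then σ x else Term.var x))).map nf))
    · -- Â is a normal form, so r₆δ₆ = Â and e₆ is root-pair similar to e1
      have haHatEq := nf_eq hAstar haHat
      have h7 : r₆.subst δ₆ =
          Term.app g₁ ((rs.map (Term.subst (fun x => if x ∈ u₁.varsL then σ x else Term.var x))).map nf) := by
        rw [← hnfsHatEq, hnfsA, haHatEq]
      have hr₆root : r₆.root = some g₁ := by
        have := congrArg Term.root h7
        rwa [NoSup.root_subst hnv6.2 δ₆] at this
      have hsim : RootPairSimilar (l₆, r₆) (l₁, r₁) := by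
        refine Or.inl ⟨?_, ?_⟩
        · simp only
          rw [hl₆root, hl₁app]; rfl
        · simp only
          rw [hr₆root, hr₁app]; rfl
      by_cases h61 : (l₆, r₆) = (l₁, r₁)
      · -- e₆ = e1 : extract the component at the head of p₁ and contradict Lemma C
        have hl₆1 : l₆ = l₁ := congrArg Prod.fst h61
        rw [hl₆1, hl₁app, NoSup.subst_app] at hsHat6
        have hlist : ((ls.map (Term.subst (fun x => if x ∈ u₁.varsL then σ x else Term.var x))).map nf)
            = ls.map (Term.subst δ₆) := by
          injection hsHat6
        cases hp₁c : p₁ with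
        | nil => exact hp₁ hp₁c
        | cons i₀ p' =>
          rw [hp₁c] at hsub₁
          rw [hl₁app] at hsub₁
          obtain ⟨v₀, hget₀, hsub₀⟩ := NoSup.subtermAt_cons hsub₁
          have hcompj := congrArg (fun l => l[i₀]?) hlist
          simp only [List.getElem?_map, hget₀, Option.map_some] at hcompj
          have hj : nf (v₀.subst (fun x => if x ∈ u₁.varsL then σ x else Term.var x))
              = v₀.subst δ₆ := Option.some.inj hcompj
          refine Clem p' v₀ hsub₀ δ₆ ?_ hj
          -- δ₆ is normalised on the variables of v₀
          intro x hx
          have hxl₁ : x ∈ l₁.varsL := by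
            rw [hl₁app]
            exact NoSup.mem_varsL_app.mpr ⟨v₀, List.mem_of_getElem? hget₀, hx⟩
          obtain ⟨qx, hqx⟩ := NoSup.exists_pos_of_mem_varsL hxl₁
          have hqxne : qx ≠ [] := by
            intro hcc
            subst hcc
            have := NoSup.subtermAt_nil hqx
            rw [hl₁app] at this
            cases this
          have hsubδ : SubtermAt (l₁.subst δ₆) qx (δ₆ x) := by
            have := NoSup.subtermAt_subst δ₆ hqx
            rwa [NoSup.var_subst] at this
          rw [hl₁app, NoSup.subst_app, ← hsHat6] at hsubδ
          exact lowEps _ _ qx (δ₆ x) hsubδ hqxne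
      · exact qD3 (l₆, r₆) (Set.mem_union_left _ h6) (l₁, r₁)
          (Set.mem_union_left _ hl₁) h61 hsim
    · -- both ŝ and Â are reducible: a right-hand-side overlap must exist
      obtain ⟨l₅, r₅, h5, δ₅, haHat5, hnfaHat5⟩ := fcRoot _ (lowEps _ _) haHat
      have hnv5 := hnvl _ _ h5
      have hl₅root : l₅.root = some g₁ := by
        have := congrArg Term.root haHat5
        rw [NoSup.root_subst hnv5.1 δ₅] at this
        exact this.symm
      have hjoin : r₅.subst δ₅ = r₆.subst δ₆ := by
        rw [← hnfaHat5, ← hnfsHat6, ← nf_star_eq hAstar, ← nf_star_eq hsstar, hnfsA]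
      -- build a single unifier of r₅ and a renamed copy of r₆
      set K : Nat := (r₅.varsL ++ r₆.varsL).foldr Nat.max 0 + 1 with hK
      have hKbound : ∀ x ∈ r₅.varsL ++ r₆.varsL, x < K := by
        intro x hx
        have : ∀ (l : List Nat) (x : Nat), x ∈ l → x ≤ l.foldr Nat.max 0 := by
          intro l
          induction l with
          | nil => intro x hx; cases hx
          | cons a as ihl =>
            intro x hx
            rcases List.mem_cons.mp hx with rfl | hx
            · simp [Nat.le_max_left]
            · exact le_trans (ihl x hx) (by simp [Nat.le_max_right])
        have := this _ x hx
        omega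
      have hunif56 : r₅.subst (fun z => if z < K then δ₅ z else δ₆ (z - K)) =
          (r₆.subst (fun n => Term.var (n + K))).subst
            (fun z => if z < K then δ₅ z else δ₆ (z - K)) := by
        have e5 : r₅.subst (fun z => if z < K then δ₅ z else δ₆ (z - K)) = r₅.subst δ₅ :=
          NoSup.subst_congr (fun x hx => by
            have : x < K := hKbound x (List.mem_append.mpr (Or.inl hx))
            simp [this])
        have e6 : (r₆.subst (fun n => Term.var (n + K))).subst
            (fun z => if z < K then δ₅ z else δ₆ (z - K)) = r₆.subst δ₆ := by
          rw [NoSup.subst_subst]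
          refine NoSup.subst_congr (fun y _ => ?_)
          show (Term.var (y + K)).subst _ = _
          rw [NoSup.var_subst]
          have h8 : ¬ (y + K < K) := by omega
          simp [h8]
        rw [e5, e6, hjoin]
      obtain ⟨σs, hmgu⟩ := NoSup.mgu_exists hunif56
      have hren : IsRenaming (fun n : Nat => Term.var (F := F) (n + K)) :=
        ⟨fun n => n + K, fun a b hab => Nat.add_right_cancel hab, fun n => rfl⟩
      have hne56 : l₅.subst σs ≠ (l₆.subst (fun n => Term.var (n + K))).subst σs := by
        intro hcc
        have := congrArg Term.root hcc
        rw [NoSup.root_subst hnv5.1 σs, NoSup.root_subst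
          (NoSup.subst_app_not_var hnv6.1 _) σs, NoSup.root_subst hnv6.1 _] at this
        rw [hl₅root, hl₆root] at this
        exact hf₁g₁ this.symm
      have hmemRHS : (l₅.subst σs, (l₆.subst (fun n => Term.var (n + K))).subst σs) ∈ RHSset R :=
        Set.mem_union_right _
          ⟨l₅, r₅, l₆, r₆, (fun n => Term.var (n + K)), σs, h5, h6, hren, hmgu, hne56, rfl⟩
      have hsim : RootPairSimilar
          (l₅.subst σs, (l₆.subst (fun n => Term.var (n + K))).subst σs) (l₁, r₁) := by
        refine Or.inr ⟨?_, ?_⟩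
        · simp only
          rw [NoSup.root_subst hnv5.1 σs, hl₅root, hr₁app]; rfl
        · simp only
          rw [NoSup.root_subst (NoSup.subst_app_not_var hnv6.1 _) σs,
            NoSup.root_subst hnv6.1 _, hl₆root, hl₁app]; rfl
      have hneE : (l₅.subst σs, (l₆.subst (fun n => Term.var (n + K))).subst σs) ≠ (l₁, r₁) := by
        intro hcc
        have h9 : l₅.subst σs = l₁ := congrArg Prod.fst hcc
        have := congrArg Term.root h9
        rw [NoSup.root_subst hnv5.1 σs, hl₅root, hl₁app] at this
        exact hf₁g₁ this.symm
      exact qD3 _ hmemRHS (l₁, r₁) (Set.mem_union_left _ hl₁) hneE hsim
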